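/- Let C be an 𝔽₂-subspace of V and γ : C → ℂ with γ(c) ≠ 0 for all c ∈ C, such that the operators g(c) := γ(c)·W(c₁,c₂) (for c = (c₁|c₂) ∈ C) satisfy g(c) ∘ g(c') = g(c + c') for all c, c' ∈ C. For i ∈ V set Q_γ(i) := {f : 𝔽₂^n → ℂ | g(c)f = ε((i,c)ₛ)·f for all c ∈ C}. Then Q_γ(i) depends only on the coset of i modulo C^⊥ₛ, and the ℂ-vector space of all functions 𝔽₂^n → ℂ is the internal direct sum of the subspaces Q_γ(ī) over the cosets ī ∈ V/C^⊥ₛ. -/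

import Mathlib

open Finset

/-- `V = 𝔽₂ⁿ × 𝔽₂ⁿ`, elements written `(a|b)`. -/
abbrev Vn (n : ℕ) : Type := (Fin n → ZMod 2) × (Fin n → ZMod 2)

/-- The symplectic inner product `((a|b),(a'|b'))ₛ = a·b' + a'·b`. -/
def symp {n : ℕ} (v w : Vn n) : ZMod 2 :=
  (∑ i, v.1 i * w.2 i) + (∑ i, w.1 i * v.2 i)

lemma symp_add_left {n : ℕ} (a b s : Vn n) : symp (a + b) s = symp a s + symp b s := by
  simp only [symp, Prod.fst_add, Prod.snd_add, Pi.add_apply, add_mul, mul_add,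
    Finset.sum_add_distrib]
  ring

lemma symp_smul_left {n : ℕ} (c : ZMod 2) (v s : Vn n) : symp (c • v) s = c * symp v s := by
  simp only [symp, Prod.smul_fst, Prod.smul_snd, Pi.smul_apply, smul_eq_mul, mul_add,
    Finset.mul_sum]
  congr 1
  · exact Finset.sum_congr rfl fun i _ => by ring
  · exact Finset.sum_congr rfl fun i _ => by ring

/-- The symplectic orthogonal `S^⊥ₛ` of a subset `S ⊆ V`, as an `𝔽₂`-subspace of `V`. -/
def sympOrtho {n : ℕ} (S : Set (Vn n)) : Submodule (ZMod 2) (Vn n) where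
  carrier := {v | ∀ s ∈ S, symp v s = 0}
  zero_mem' := by intro s hs; simp [symp]
  add_mem' := by
    intro a b ha hb s hs
    rw [Set.mem_setOf_eq] at *
    rw [symp_add_left, ha s hs, hb s hs, add_zero]
  smul_mem' := by
    intro c v hv s hs
    rw [Set.mem_setOf_eq] at *
    rw [symp_smul_left, hv s hs, mul_zero]

/-- `ε : 𝔽₂ → ℂ`, `ε(0) = 1`, `ε(1) = -1`. -/
def eps (x : ZMod 2) : ℂ := if x = 0 then 1 else -1

/-- Quantum weight of `(a|b)`: number of positions `i` with `(aᵢ,bᵢ) ≠ (0,0)`. -/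
def wQ {n : ℕ} (v : Vn n) : ℕ :=
  (Finset.univ.filter fun i => (v.1 i, v.2 i) ≠ ((0 : ZMod 2), (0 : ZMod 2))).card

/-- Quotient minimum norm `‖x̄‖ = min_{v ∈ x̄} w_Q(v)` on `V ⧸ H`. -/
noncomputable def qnorm {n : ℕ} (H : Submodule (ZMod 2) (Vn n)) (x : Vn n ⧸ H) : ℕ :=
  sInf {m | ∃ v : Vn n, (Submodule.Quotient.mk v : Vn n ⧸ H) = x ∧ wQ v = m}

/-- Quotient distance `d(x̄,ȳ) = ‖x̄ - ȳ‖` on `V ⧸ H`. -/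
noncomputable def qdist {n : ℕ} (H : Submodule (ZMod 2) (Vn n)) (x y : Vn n ⧸ H) : ℕ :=
  qnorm H (x - y)

/-- The operator `W(a,b)` acting on functions `𝔽₂ⁿ → ℂ`: `(W(a,b)f)(x) = ε(b·x)·f(x+a)`. -/
def Wop {n : ℕ} (a b : Fin n → ZMod 2) (f : (Fin n → ZMod 2) → ℂ) : (Fin n → ZMod 2) → ℂ :=
  fun x => eps (∑ i, b i * x i) * f (x + a)

/-- The joint eigenspace `Q(i)` of the operators `W(c₁,c₂)`, `(c₁|c₂) ∈ C`. -/
def Qset {n : ℕ} (C : Submodule (ZMod 2) (Vn n)) (i : Vn n) : Set ((Fin n → ZMod 2) → ℂ) :=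
  {f | ∀ c ∈ C, ∀ x, Wop c.1 c.2 f x = eps (symp i c) * f x}

/-- Joint eigenspace `Q_γ(i)` for the rescaled operators `g(c) = γ(c)·W(c₁,c₂)`. -/
noncomputable def QgamSub {n : ℕ} (C : Submodule (ZMod 2) (Vn n)) (γ : C → ℂ) (i : Vn n) :
    Submodule ℂ ((Fin n → ZMod 2) → ℂ) where
  carrier := {f | ∀ c : C, ∀ x,
    γ c * Wop (c : Vn n).1 (c : Vn n).2 f x = eps (symp i (c : Vn n)) * f x}
  zero_mem' := by intro c x; simp [Wop]
  add_mem' := by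
    intro f g hf hg c x
    have h1 := hf c x
    have h2 := hg c x
    simp only [Wop, Pi.add_apply] at h1 h2 ⊢
    linear_combination h1 + h2
  smul_mem' := by
    intro a f hf c x
    have h := hf c x
    simp only [Wop, Pi.smul_apply, smul_eq_mul] at h ⊢
    linear_combination a * h


set_option linter.unusedSectionVars false

lemma eps_add (a b : ZMod 2) : eps (a + b) = eps a * eps b := by
  have h2 : (1 + 1 : ZMod 2) = 0 := by decide
  have ha : a = 0 ∨ a = 1 := by revert a; decide
  have hb : b = 0 ∨ b = 1 := by revert b; decide
  rcases ha with rfl | rfl <;> rcases hb with rfl | rfl <;> simp +decide [eps, h2]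

lemma eps_zero : eps 0 = 1 := rfl

lemma eps_one : eps 1 = -1 := by norm_num [eps]

lemma zmod2_cases (a : ZMod 2) (h : a ≠ 0) : a = 1 := by revert a; decide

lemma symp_add_right {n : ℕ} (v a b : Vn n) : symp v (a + b) = symp v a + symp v b := by
  simp only [symp, Prod.fst_add, Prod.snd_add, Pi.add_apply, add_mul, mul_add,
    Finset.sum_add_distrib]
  ring

lemma symp_zero_right {n : ℕ} (v : Vn n) : symp v 0 = 0 := by simp [symp]
lemma symp_zero_left {n : ℕ} (v : Vn n) : symp 0 v = 0 := by simp [symp]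

lemma vn_add_self {n : ℕ} (v : Vn n) : v + v = 0 := by
  have h : ∀ a : ZMod 2, a + a = 0 := by decide
  ext i <;> simp [h]

lemma exists_symp_one {n : ℕ} (c : Vn n) (hc : c ≠ 0) : ∃ j : Vn n, symp j c = 1 := by
  have : c.1 ≠ 0 ∨ c.2 ≠ 0 := by
    by_contra h
    push_neg at h
    exact hc (Prod.ext h.1 h.2)
  rcases this with h | h
  · obtain ⟨k, hk⟩ := Function.ne_iff.mp h
    refine ⟨(0, Pi.single k 1), ?_⟩
    simp only [symp]
    rw [Finset.sum_eq_single k]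
    · simp [Pi.single_apply, zmod2_cases _ hk]
    · intro b _ hb; simp [Pi.single_apply, hb]
    · simp
  · obtain ⟨k, hk⟩ := Function.ne_iff.mp h
    refine ⟨(Pi.single k 1, 0), ?_⟩
    simp only [symp]
    rw [Finset.sum_eq_single k]
    · simp [Pi.single_apply, zmod2_cases _ hk]
    · intro b _ hb; simp [Pi.single_apply, hb]
    · simp

section G
variable {n : ℕ} (C : Submodule (ZMod 2) (Vn n)) (γ : C → ℂ)

/-- The rescaled operator `g(c) = γ(c)·W(c₁,c₂)`. -/
noncomputable def Gop (c : C) (f : (Fin n → ZMod 2) → ℂ) : (Fin n → ZMod 2) → ℂ :=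
  fun x => γ c * Wop (c : Vn n).1 (c : Vn n).2 f x

variable {C γ}

lemma Gop_smul (c : C) (a : ℂ) (f : (Fin n → ZMod 2) → ℂ) :
    Gop C γ c (a • f) = a • Gop C γ c f := by
  funext x; simp [Gop, Wop]; ring

lemma Gop_sum {ι : Type*} (c : C) (s : Finset ι) (f : ι → (Fin n → ZMod 2) → ℂ) :
    Gop C γ c (∑ k ∈ s, f k) = ∑ k ∈ s, Gop C γ c (f k) := by
  funext x
  simp [Gop, Wop, Finset.sum_apply, Finset.mul_sum]

lemma mem_QgamSub_iff (i : Vn n) (f : (Fin n → ZMod 2) → ℂ) :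
    f ∈ QgamSub C γ i ↔ ∀ c : C, Gop C γ c f = eps (symp i (c : Vn n)) • f := by
  constructor
  · intro hf c
    funext x
    simpa [Gop] using hf c x
  · intro hf c x
    have := congrFun (hf c) x
    simpa [Gop] using this

end G

section G2
variable {n : ℕ} {C : Submodule (ZMod 2) (Vn n)} {γ : C → ℂ}
variable (hγ : ∀ c : C, γ c ≠ 0)
variable (hmul : ∀ c c' : C, ∀ (f : (Fin n → ZMod 2) → ℂ) (x : Fin n → ZMod 2),
      γ c * Wop (c : Vn n).1 (c : Vn n).2
          (fun y => γ c' * Wop (c' : Vn n).1 (c' : Vn n).2 f y) x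
        = γ (c + c') * Wop ((c : Vn n) + (c' : Vn n)).1 ((c : Vn n) + (c' : Vn n)).2 f x)

include hmul in
lemma Gop_Gop (c c' : C) (f : (Fin n → ZMod 2) → ℂ) :
    Gop C γ c (Gop C γ c' f) = Gop C γ (c + c') f := by
  funext x
  have h := hmul c c' f x
  simp only [Gop]
  rw [show ((c + c' : C) : Vn n) = (c : Vn n) + (c' : Vn n) from rfl]
  exact h

lemma Wop_zero (f : (Fin n → ZMod 2) → ℂ) (x : Fin n → ZMod 2) :
    Wop (0 : Fin n → ZMod 2) 0 f x = f x := by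
  simp [Wop, eps]

include hγ hmul in
lemma gamma_zero : γ (0 : C) = 1 := by
  have h := hmul 0 0 (fun _ => 1) 0
  simp [Wop, eps] at h
  have h0 := hγ 0
  have : γ 0 * γ 0 = γ 0 * 1 := by rw [mul_one]; exact h
  exact mul_left_cancel₀ h0 this

include hγ hmul in
lemma Gop_zero (f : (Fin n → ZMod 2) → ℂ) : Gop C γ (0 : C) f = f := by
  funext x
  simp only [Gop, Submodule.coe_zero, Prod.fst_zero, Prod.snd_zero, Wop_zero,
    gamma_zero hγ hmul, one_mul]

end G2

lemma mem_sympOrtho_iff {n : ℕ} {S : Set (Vn n)} {w : Vn n} :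
    w ∈ sympOrtho S ↔ ∀ s ∈ S, symp w s = 0 := Iff.rfl

section Main
variable {n : ℕ} {C : Submodule (ZMod 2) (Vn n)} {γ : C → ℂ}

lemma symp_congr {i j : Vn n} (h : i - j ∈ sympOrtho (C : Set (Vn n))) {c : Vn n}
    (hc : c ∈ C) : symp i c = symp j c := by
  have h0 : symp (i - j) c = 0 := h c hc
  have hij : i = (i - j) + j := by abel
  rw [hij, symp_add_left, h0, zero_add]

lemma QgamSub_congr {i j : Vn n} (h : i - j ∈ sympOrtho (C : Set (Vn n))) :
    QgamSub C γ i = QgamSub C γ j := by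
  have key : ∀ c : C, symp i (c : Vn n) = symp j (c : Vn n) := fun c => symp_congr h c.2
  ext f
  constructor <;> intro hf c x
  · rw [← key]; exact hf c x
  · rw [key]; exact hf c x

variable [Fintype ↥C]

/-- The (unnormalised) projector `T_i = ∑_{c ∈ C} ε((i,c)ₛ) g(c)`. -/
noncomputable def Topr (C : Submodule (ZMod 2) (Vn n)) (γ : C → ℂ) [Fintype ↥C] (i : Vn n)
    (f : (Fin n → ZMod 2) → ℂ) : (Fin n → ZMod 2) → ℂ :=
  ∑ c : ↥C, eps (symp i (c : Vn n)) • Gop C γ c f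

lemma coe_add_self (c : C) : c + c = (0 : C) :=
  Subtype.ext (by simpa using vn_add_self (c : Vn n))

lemma Topr_mem
    (hmul : ∀ c c' : C, ∀ (f : (Fin n → ZMod 2) → ℂ) (x : Fin n → ZMod 2),
      γ c * Wop (c : Vn n).1 (c : Vn n).2
          (fun y => γ c' * Wop (c' : Vn n).1 (c' : Vn n).2 f y) x
        = γ (c + c') * Wop ((c : Vn n) + (c' : Vn n)).1 ((c : Vn n) + (c' : Vn n)).2 f x)
    (i : Vn n) (f : (Fin n → ZMod 2) → ℂ) : Topr C γ i f ∈ QgamSub C γ i := by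
  rw [mem_QgamSub_iff]
  intro c'
  have step1 : Gop C γ c' (Topr C γ i f)
      = ∑ c : ↥C, eps (symp i (c : Vn n)) • Gop C γ (c' + c) f := by
    rw [Topr, Gop_sum]
    refine Finset.sum_congr rfl fun c _ => ?_
    rw [Gop_smul, Gop_Gop hmul]
  rw [step1]
  have step2 : ∑ c : ↥C, eps (symp i (c : Vn n)) • Gop C γ (c' + c) f
      = ∑ d : ↥C, (eps (symp i (c' : Vn n)) * eps (symp i (d : Vn n))) • Gop C γ d f := by
    refine Fintype.sum_equiv (Equiv.addLeft c') _ _ fun d => ?_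
    have h1 : c' + (c' + d) = d := by rw [← add_assoc, coe_add_self, zero_add]
    have h2 : ((c' + d : C) : Vn n) = (c' : Vn n) + (d : Vn n) := rfl
    simp only [Equiv.coe_addLeft, h1, h2, symp_add_right, eps_add]
    have he : eps (symp i (c' : Vn n)) * eps (symp i (c' : Vn n)) = 1 := by
      rw [← eps_add]
      have hz : ∀ a : ZMod 2, a + a = 0 := by decide
      rw [hz, eps_zero]
    rw [← mul_assoc, he, one_mul]
  rw [step2, Topr, Finset.smul_sum]
  exact Finset.sum_congr rfl fun d _ => by rw [smul_smul]

lemma charSum_C {w : Vn n} (hw : w ∉ sympOrtho (C : Set (Vn n))) :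
    ∑ c : ↥C, eps (symp w (c : Vn n)) = 0 := by
  rw [mem_sympOrtho_iff] at hw
  push_neg at hw
  obtain ⟨s, hsC, hs⟩ := hw
  set c₀ : C := ⟨s, hsC⟩ with hc₀
  have hs1 : symp w s = 1 := zmod2_cases _ hs
  have flip : ∑ c : ↥C, eps (symp w (c : Vn n))
      = ∑ d : ↥C, eps (symp w ((c₀ + d : C) : Vn n)) :=
    Fintype.sum_equiv (Equiv.addLeft c₀) _ _ fun d => by
      rw [show (Equiv.addLeft c₀) d = c₀ + d from rfl, ← add_assoc, coe_add_self, zero_add]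
  have : ∑ c : ↥C, eps (symp w (c : Vn n)) = -∑ c : ↥C, eps (symp w (c : Vn n)) := by
    nth_rewrite 1 [flip]
    rw [← Finset.sum_neg_distrib]
    refine Finset.sum_congr rfl fun d _ => ?_
    have h2 : ((c₀ + d : C) : Vn n) = s + (d : Vn n) := rfl
    rw [h2, symp_add_right, eps_add, hs1, eps_one, neg_one_mul]
  have h2 : (2 : ℂ) * ∑ c : ↥C, eps (symp w (c : Vn n)) = 0 := by linear_combination this
  exact (mul_eq_zero.mp h2).resolve_left two_ne_zero

end Main

section Quot
variable {n : ℕ} {C : Submodule (ZMod 2) (Vn n)} {γ : C → ℂ} [Fintype ↥C]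
variable [Fintype (Vn n ⧸ sympOrtho (C : Set (Vn n)))]
variable (rep : (Vn n ⧸ sympOrtho (C : Set (Vn n))) → Vn n)
variable (hrep : ∀ q, (Submodule.Quotient.mk (rep q) : Vn n ⧸ sympOrtho (C : Set (Vn n))) = q)

lemma charSum_Q (hrep : ∀ q, (Submodule.Quotient.mk (rep q) :
      Vn n ⧸ sympOrtho (C : Set (Vn n))) = q)
    (c : C) (hc : (c : Vn n) ≠ 0) :
    ∑ q : Vn n ⧸ sympOrtho (C : Set (Vn n)), eps (symp (rep q) (c : Vn n)) = 0 := by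
  obtain ⟨j, hj⟩ := exists_symp_one (c : Vn n) hc
  have key : ∀ q : Vn n ⧸ sympOrtho (C : Set (Vn n)),
      symp (rep (Submodule.Quotient.mk j + q)) (c : Vn n)
        = symp j (c : Vn n) + symp (rep q) (c : Vn n) := by
    intro q
    have hmk : (Submodule.Quotient.mk (rep (Submodule.Quotient.mk j + q)) :
          Vn n ⧸ sympOrtho (C : Set (Vn n)))
        = Submodule.Quotient.mk (j + rep q) := by
      rw [Submodule.Quotient.mk_add, hrep q, hrep (Submodule.Quotient.mk j + q)]
    have hmem : rep (Submodule.Quotient.mk j + q) - (j + rep q) ∈ sympOrtho (C : Set (Vn n)) :=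
      (Submodule.Quotient.eq _).mp hmk
    rw [symp_congr hmem c.2, symp_add_left]
  have flip : ∑ q : Vn n ⧸ sympOrtho (C : Set (Vn n)),
        eps (symp (rep (Submodule.Quotient.mk j + q)) (c : Vn n))
      = ∑ q : Vn n ⧸ sympOrtho (C : Set (Vn n)), eps (symp (rep q) (c : Vn n)) :=
    Fintype.sum_equiv (Equiv.addLeft (Submodule.Quotient.mk j)) _ _ fun q => rfl
  have hflip : ∑ q : Vn n ⧸ sympOrtho (C : Set (Vn n)), eps (symp (rep q) (c : Vn n))
      = -∑ q : Vn n ⧸ sympOrtho (C : Set (Vn n)), eps (symp (rep q) (c : Vn n)) := by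
    conv_lhs => rw [← flip]
    rw [← Finset.sum_neg_distrib]
    refine Finset.sum_congr rfl fun q _ => ?_
    rw [key, eps_add, hj, eps_one, neg_one_mul]
  have h2 : (2 : ℂ) * ∑ q : Vn n ⧸ sympOrtho (C : Set (Vn n)),
      eps (symp (rep q) (c : Vn n)) = 0 := by
    linear_combination hflip
  exact (mul_eq_zero.mp h2).resolve_left two_ne_zero

lemma Topr_sumF {ι : Type*} (j : Vn n) (s : Finset ι) (F : ι → (Fin n → ZMod 2) → ℂ) :
    Topr C γ j (∑ k ∈ s, F k) = ∑ k ∈ s, Topr C γ j (F k) := by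
  unfold Topr
  calc ∑ c : ↥C, eps (symp j (c : Vn n)) • Gop C γ c (∑ k ∈ s, F k)
      = ∑ c : ↥C, ∑ k ∈ s, eps (symp j (c : Vn n)) • Gop C γ c (F k) := by
        refine Finset.sum_congr rfl fun c _ => ?_
        rw [Gop_sum, Finset.smul_sum]
    _ = _ := Finset.sum_comm

lemma eigen_Topr {i j : Vn n} {F : (Fin n → ZMod 2) → ℂ} (hF : F ∈ QgamSub C γ i) :
    Topr C γ j F = (∑ c : ↥C, eps (symp (j + i) (c : Vn n))) • F := by
  unfold Topr
  rw [Finset.sum_smul]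
  refine Finset.sum_congr rfl fun c _ => ?_
  rw [(mem_QgamSub_iff _ _).mp hF c, smul_smul, ← eps_add, ← symp_add_left]

lemma sum_Topr
    (hγ : ∀ c : C, γ c ≠ 0)
    (hmul : ∀ c c' : C, ∀ (f : (Fin n → ZMod 2) → ℂ) (x : Fin n → ZMod 2),
      γ c * Wop (c : Vn n).1 (c : Vn n).2
          (fun y => γ c' * Wop (c' : Vn n).1 (c' : Vn n).2 f y) x
        = γ (c + c') * Wop ((c : Vn n) + (c' : Vn n)).1 ((c : Vn n) + (c' : Vn n)).2 f x)
    (hrep : ∀ q, (Submodule.Quotient.mk (rep q) :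
      Vn n ⧸ sympOrtho (C : Set (Vn n))) = q)
    (f : (Fin n → ZMod 2) → ℂ) :
    ∑ q : Vn n ⧸ sympOrtho (C : Set (Vn n)), Topr C γ (rep q) f
      = (Fintype.card (Vn n ⧸ sympOrtho (C : Set (Vn n))) : ℂ) • f := by
  unfold Topr
  calc ∑ q : Vn n ⧸ sympOrtho (C : Set (Vn n)), ∑ c : ↥C,
        eps (symp (rep q) (c : Vn n)) • Gop C γ c f
      = ∑ c : ↥C, (∑ q : Vn n ⧸ sympOrtho (C : Set (Vn n)),
          eps (symp (rep q) (c : Vn n))) • Gop C γ c f := by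
        rw [Finset.sum_comm]
        exact Finset.sum_congr rfl fun c _ => (Finset.sum_smul).symm
    _ = (Fintype.card (Vn n ⧸ sympOrtho (C : Set (Vn n))) : ℂ) • f := by
        rw [Finset.sum_eq_single (0 : ↥C)]
        · have h0 : ∀ q : Vn n ⧸ sympOrtho (C : Set (Vn n)),
              eps (symp (rep q) ((0 : C) : Vn n)) = 1 := by
            intro q
            rw [show ((0 : C) : Vn n) = 0 from rfl, symp_zero_right, eps_zero]
          rw [Gop_zero hγ hmul]
          simp only [h0, Finset.sum_const, Finset.card_univ, nsmul_eq_mul, mul_one]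
        · intro b _ hb
          rw [charSum_Q rep hrep b (fun hbv => hb (Subtype.ext hbv)), zero_smul]
        · intro h; exact absurd (Finset.mem_univ _) h

end Quot


/-- If the rescaled operators `g(c) = γ(c)·W(c₁,c₂)` (`c ∈ C`, `γ(c) ≠ 0`)
form a group: `g(c)∘g(c') = g(c+c')`, then `Q_γ(i)` depends only on the coset of `i`
modulo `C^⊥ₛ`, and the space of all functions `𝔽₂ⁿ → ℂ` is the internal direct sum of
the subspaces `Q_γ(ī)`, `ī ∈ V ⧸ C^⊥ₛ`. -/
theorem QgamSub_direct_sum (n : ℕ) (hn : 0 < n) (C : Submodule (ZMod 2) (Vn n))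
    (γ : C → ℂ) (hγ : ∀ c : C, γ c ≠ 0)
    (hmul : ∀ c c' : C, ∀ (f : (Fin n → ZMod 2) → ℂ) (x : Fin n → ZMod 2),
      γ c * Wop (c : Vn n).1 (c : Vn n).2
          (fun y => γ c' * Wop (c' : Vn n).1 (c' : Vn n).2 f y) x
        = γ (c + c') * Wop ((c : Vn n) + (c' : Vn n)).1 ((c : Vn n) + (c' : Vn n)).2 f x) :
    (∀ i j : Vn n, i - j ∈ sympOrtho (C : Set (Vn n)) → QgamSub C γ i = QgamSub C γ j) ∧
    (∀ f : (Fin n → ZMod 2) → ℂ,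
      ∃! g : (Vn n ⧸ sympOrtho (C : Set (Vn n))) → ((Fin n → ZMod 2) → ℂ),
        (∀ i : Vn n, g (Submodule.Quotient.mk i) ∈ QgamSub C γ i) ∧ f = ∑ᶠ y, g y) := by
  classical
  haveI : Fintype ↥C := Fintype.ofFinite _
  haveI : Finite (Vn n ⧸ sympOrtho (C : Set (Vn n))) :=
    Finite.of_surjective _ (Submodule.Quotient.mk_surjective (sympOrtho (C : Set (Vn n))))
  haveI : Fintype (Vn n ⧸ sympOrtho (C : Set (Vn n))) := Fintype.ofFinite _
  haveI : Nonempty (Vn n ⧸ sympOrtho (C : Set (Vn n))) := ⟨Submodule.Quotient.mk 0⟩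
  constructor
  · intro i j hij
    exact QgamSub_congr hij
  · intro f
    choose rep hrep using Submodule.Quotient.mk_surjective (sympOrtho (C : Set (Vn n)))
    set N : ℂ := (Fintype.card (Vn n ⧸ sympOrtho (C : Set (Vn n))) : ℂ) with hN
    have hNne : N ≠ 0 := Nat.cast_ne_zero.mpr Fintype.card_ne_zero
    have hgmem : ∀ q, N⁻¹ • Topr C γ (rep q) f ∈ QgamSub C γ (rep q) :=
      fun q => Submodule.smul_mem _ _ (Topr_mem hmul _ f)
    have hgsum : ∑ q, N⁻¹ • Topr C γ (rep q) f = f := by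
      rw [← Finset.smul_sum, sum_Topr rep hγ hmul hrep f, ← hN, smul_smul,
        inv_mul_cancel₀ hNne, one_smul]
    refine ⟨fun q => N⁻¹ • Topr C γ (rep q) f, ⟨?_, ?_⟩, ?_⟩
    · intro i
      have h2 : QgamSub C γ (rep (Submodule.Quotient.mk i)) = QgamSub C γ i :=
        QgamSub_congr ((Submodule.Quotient.eq _).mp (hrep (Submodule.Quotient.mk i)))
      exact h2 ▸ hgmem (Submodule.Quotient.mk i)
    · rw [finsum_eq_sum_of_fintype, hgsum]
    · rintro g' ⟨hm, hsum⟩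
      funext q₀
      have hm' : ∀ q, g' q ∈ QgamSub C γ (rep q) := by
        intro q
        have := hm (rep q)
        rwa [hrep] at this
      set D : (Vn n ⧸ sympOrtho (C : Set (Vn n))) → (Fin n → ZMod 2) → ℂ :=
        fun q => g' q - N⁻¹ • Topr C γ (rep q) f with hD
      have hDmem : ∀ q, D q ∈ QgamSub C γ (rep q) := fun q => sub_mem (hm' q) (hgmem q)
      have hDsum : ∑ q, D q = 0 := by
        have h1 : ∑ q, g' q = f := by
          rw [← finsum_eq_sum_of_fintype]; exact hsum.symm
        rw [hD, Finset.sum_sub_distrib, h1, hgsum, sub_self]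
      have happ : ∑ q, Topr C γ (rep q₀) (D q) = 0 := by
        rw [← Topr_sumF, hDsum]
        funext x
        simp [Topr, Gop, Wop, Finset.sum_apply]
      have heig : ∀ q, Topr C γ (rep q₀) (D q)
          = (∑ c : ↥C, eps (symp (rep q₀ + rep q) (c : Vn n))) • D q :=
        fun q => eigen_Topr (hDmem q)
      haveI : Nonempty ↥C := ⟨0⟩
      have hsingle : ∑ q, Topr C γ (rep q₀) (D q) = (Fintype.card ↥C : ℂ) • D q₀ := by
        rw [Finset.sum_eq_single q₀]
        · rw [heig, vn_add_self]
          have h0 : ∀ c : ↥C, eps (symp 0 (c : Vn n)) = 1 := fun c => by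
            rw [symp_zero_left, eps_zero]
          simp only [h0, Finset.sum_const, Finset.card_univ, nsmul_eq_mul, mul_one]
        · intro q _ hq
          have hw : rep q₀ + rep q ∉ sympOrtho (C : Set (Vn n)) := by
            intro hmem
            apply hq
            have h0 : (Submodule.Quotient.mk (rep q₀ + rep q) :
                Vn n ⧸ sympOrtho (C : Set (Vn n))) = 0 :=
              (Submodule.Quotient.mk_eq_zero _).mpr hmem
            rw [Submodule.Quotient.mk_add, hrep, hrep] at h0
            have hqq : q + q = 0 := by
              rw [← hrep q, ← Submodule.Quotient.mk_add, vn_add_self, Submodule.Quotient.mk_zero]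
            have e1 := eq_neg_of_add_eq_zero_left h0
            have e2 := eq_neg_of_add_eq_zero_left hqq
            rw [← e2] at e1
            exact e1.symm
          rw [heig, charSum_C hw, zero_smul]
        · intro h; exact absurd (Finset.mem_univ _) h
      have hC0 : (Fintype.card ↥C : ℂ) ≠ 0 := Nat.cast_ne_zero.mpr Fintype.card_ne_zero
      have hDzero : D q₀ = 0 := by
        rw [hsingle] at happ
        exact (smul_eq_zero.mp happ).resolve_left hC0
      have : g' q₀ - N⁻¹ • Topr C γ (rep q₀) f = 0 := hDzero
      exact sub_eq_zero.mp this
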